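/- Let n ≥ 1, ℓ ∈ ℝⁿ, λ, γ > 0, and suppose ℓⱼ ≤ nλ − √n·γ for all j. Then w = (1,1,…,1) is a global minimizer of F(w) = (1/n)Σⱼ wⱼℓⱼ − λΣⱼ wⱼ + (γ/√n)‖w‖₂ over [0,1]ⁿ. -/

import Mathlib

open Finset

/-- Easy task: if `ℓⱼ ≤ nλ − √n·γ` for all `j`, then `w = (1,…,1)` globally
minimizes `F(w) = (1/n) Σⱼ wⱼ ℓⱼ − λ Σⱼ wⱼ + (γ/√n) ‖w‖₂` over `[0,1]ⁿ`. -/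
theorem easy_task_full_weight (n : ℕ) (hn : 1 ≤ n) (ℓ : Fin n → ℝ)
    (lam γ : ℝ) (hlam : 0 < lam) (hγ : 0 < γ)
    (heasy : ∀ j, ℓ j ≤ (n : ℝ) * lam - Real.sqrt n * γ) :
    ∀ w ∈ Set.Icc (0 : Fin n → ℝ) 1,
      (1 / (n : ℝ)) * ∑ j, (1 : Fin n → ℝ) j * ℓ j - lam * ∑ j, (1 : Fin n → ℝ) j +
          (γ / Real.sqrt n) * Real.sqrt (∑ j, ((1 : Fin n → ℝ) j)^2) ≤
      (1 / (n : ℝ)) * ∑ j, w j * ℓ j - lam * ∑ j, w j +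
          (γ / Real.sqrt n) * Real.sqrt (∑ j, (w j)^2) := by
  intro w hw
  obtain ⟨hw0, hw1⟩ := hw
  have hw0' : ∀ j, 0 ≤ w j := fun j => hw0 j
  have hw1' : ∀ j, w j ≤ 1 := fun j => hw1 j
  have hn0 : (0:ℝ) < n := by exact_mod_cast hn
  have hs : (0:ℝ) < Real.sqrt n := Real.sqrt_pos.mpr hn0
  have hs2 : Real.sqrt n ^ 2 = (n:ℝ) := Real.sq_sqrt hn0.le
  have hsn : Real.sqrt n ≤ (n:ℝ) := by
    nlinarith [hs, hs2, Real.one_le_sqrt.mpr (by exact_mod_cast hn : (1:ℝ) ≤ n)]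
  -- simplify the w = 1 side
  simp only [Pi.one_apply, one_mul, one_pow]
  rw [Finset.sum_const, Finset.card_univ, Fintype.card_fin, nsmul_eq_mul, mul_one]
  set S := ∑ j, w j with hS
  have hS0 : 0 ≤ S := Finset.sum_nonneg fun j _ => hw0' j
  have hSn : S ≤ (n:ℝ) := by
    calc S ≤ ∑ _j : Fin n, (1:ℝ) := Finset.sum_le_sum fun j _ => hw1' j
    _ = (n:ℝ) := by simp
  -- Cauchy–Schwarz: S² ≤ n * Σ wⱼ²
  have hcs : S ^ 2 ≤ (n:ℝ) * ∑ j, (w j)^2 := by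
    have h := Finset.sum_mul_sq_le_sq_mul_sq Finset.univ w (fun _ => (1:ℝ))
    simpa [mul_comm] using h
  have hkey : S / Real.sqrt n ≤ Real.sqrt (∑ j, (w j)^2) := by
    have h2 : (S / Real.sqrt n)^2 ≤ ∑ j, (w j)^2 := by
      rw [div_pow, hs2, div_le_iff₀ hn0]
      nlinarith [hcs]
    calc S / Real.sqrt n = Real.sqrt ((S / Real.sqrt n)^2) :=
          (Real.sqrt_sq (by positivity)).symm
    _ ≤ _ := Real.sqrt_le_sqrt h2
  -- termwise inequality from easiness
  have hterm : ∀ j, (1 - w j) * (lam - ℓ j / n) ≥ (1 - w j) * (γ / Real.sqrt n) := by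
    intro j
    have h1w : 0 ≤ 1 - w j := by linarith [hw1' j]
    have : γ / Real.sqrt n ≤ lam - ℓ j / n := by
      rw [div_le_iff₀ hs]
      have hx : (ℓ j / (n:ℝ)) * n = ℓ j := div_mul_cancel₀ _ hn0.ne'
      nlinarith [mul_nonneg hs.le (sub_nonneg.mpr (heasy j)), hs2, hx, hn0, hs]
    exact mul_le_mul_of_nonneg_left this h1w
  have hsum : ∑ j, (1 - w j) * (γ / Real.sqrt n) ≤ ∑ j, (1 - w j) * (lam - ℓ j / n) :=
    Finset.sum_le_sum fun j _ => hterm j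
  have hsum1 : ∑ j, (1 - w j) * (γ / Real.sqrt n) = ((n:ℝ) - S) * (γ / Real.sqrt n) := by
    rw [← Finset.sum_mul]
    congr 1
    rw [Finset.sum_sub_distrib]
    simp [hS]
  have expand : ∀ j : Fin n, (1 - w j) * (lam - ℓ j / (n:ℝ))
      = lam - ℓ j / n - w j * lam + w j * ℓ j / n := fun j => by ring
  have hsum2 : ∑ j, (1 - w j) * (lam - ℓ j / n)
      = ((n:ℝ) * lam - lam * S) - (∑ j, ℓ j) / n + (∑ j, w j * ℓ j) / n := by
    simp only [expand]
    rw [Finset.sum_add_distrib, Finset.sum_sub_distrib, Finset.sum_sub_distrib,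
      ← Finset.sum_div, ← Finset.sum_div, ← Finset.sum_mul, Finset.sum_const,
      Finset.card_univ, Fintype.card_fin, nsmul_eq_mul]
    rw [← hS]
    ring
  rw [hsum1, hsum2] at hsum
  -- combine
  have hbig : (γ / Real.sqrt n) * (S / Real.sqrt n) ≤ (γ / Real.sqrt n) * Real.sqrt (∑ j, (w j)^2) :=
    mul_le_mul_of_nonneg_left hkey (by positivity)
  have hγs : γ / Real.sqrt n * Real.sqrt n = γ := div_mul_cancel₀ γ hs.ne'
  have hfin : (γ / Real.sqrt n) * (S / Real.sqrt n) = γ * S / n := by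
    rw [div_mul_div_comm, Real.mul_self_sqrt hn0.le]
  -- goal: Σℓ/n - lam*n + (γ/√n)*√n ≤ Σwℓ/n - lam*S + (γ/√n)*√(Σw²)
  rw [hγs]
  have hSn' : γ * S / n ≥ γ * S / (n:ℝ) := le_refl _
  have hmono : ((n:ℝ) - S) * (γ / n) ≤ ((n:ℝ) - S) * (γ / Real.sqrt n) := by
    apply mul_le_mul_of_nonneg_left _ (by linarith)
    apply div_le_div_of_nonneg_left hγ.le hs hsn
  have hid : ((n:ℝ) - S) * (γ / n) = γ - γ * S / n := by field_simp
  have hfin2 : γ * S / n ≤ (γ / Real.sqrt n) * Real.sqrt (∑ j, (w j)^2) := by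
    rw [← hfin]; exact hbig
  ring_nf at hsum hmono hid hfin2 ⊢
  linarith [hsum, hmono, hid, hfin2]
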